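/- For a random walk with i.i.d. continuous symmetric step distribution, the probability that no record occurs in the first k steps is q(k) = binomial(2k,k)/4^k; i.e., P(max(X_1,...,X_k) < X_0) = binomial(2k,k)/4^k for all k >= 1 (Sparre Andersen theorem). -/

import Mathlib

open MeasureTheory ProbabilityTheory Finset
open scoped ENNReal


noncomputable def cb (n : ℕ) : ℝ := (Nat.centralBinom n : ℝ) / 4 ^ n

lemma cb_zero : cb 0 = 1 := by simp [cb, Nat.centralBinom_zero]

lemma cb_rec (k : ℕ) : (2*(k:ℝ)+2) * cb (k+1) = (2*k+1) * cb k := by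
  have h := Nat.succ_mul_centralBinom_succ k
  have h2 : ((k:ℝ)+1) * (Nat.centralBinom (k+1) : ℝ)
      = 2*(2*k+1) * (Nat.centralBinom k : ℝ) := by exact_mod_cast congrArg (Nat.cast (R := ℝ)) h
  have h4 : (0:ℝ) < 4 ^ (k+1) := by positivity
  have h4' : (4:ℝ) ^ (k+1) = 4 * 4 ^ k := by ring
  unfold cb
  rw [h4']
  field_simp
  nlinarith [h2, pow_pos (show (0:ℝ) < 4 by norm_num) k]

lemma cb_T (m : ℕ) :
    ∑ k ∈ range (m+1), (2*(k:ℝ)) * (cb k * cb (m-k)) = m * ∑ k ∈ range (m+1), cb k * cb (m-k) := by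
  have hrefl := Finset.sum_range_reflect (fun k => (2*(k:ℝ)) * (cb k * cb (m-k))) (m+1)
  -- hrefl : ∑ j ∈ range (m+1), f (m+1-1-j) = ∑ j, f j, i.e. f (m - j)
  have key : (2:ℝ) * (∑ k ∈ range (m+1), (2*(k:ℝ)) * (cb k * cb (m-k)))
      = 2 * m * ∑ k ∈ range (m+1), cb k * cb (m-k) := by
    calc (2:ℝ) * ∑ k ∈ range (m+1), (2*(k:ℝ)) * (cb k * cb (m-k))
        = (∑ k ∈ range (m+1), (2*(k:ℝ)) * (cb k * cb (m-k)))
          + ∑ k ∈ range (m+1), (2*((m-k : ℕ):ℝ)) * (cb (m-k) * cb (m-(m-k))) := by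
          rw [show m+1-1 = m from rfl] at hrefl
          rw [← hrefl]; ring
      _ = ∑ k ∈ range (m+1), ((2*(k:ℝ)) * (cb k * cb (m-k)) + (2*((m-k : ℕ):ℝ)) * (cb (m-k) * cb (m-(m-k)))) := by
          rw [← Finset.sum_add_distrib]
      _ = ∑ k ∈ range (m+1), (2*(m:ℝ)) * (cb k * cb (m-k)) := by
          refine Finset.sum_congr rfl fun k hk => ?_
          have hk' : k ≤ m := by simpa [Nat.lt_succ_iff] using hk
          have h1 : m - (m - k) = k := by omega
          have h2 : ((m-k : ℕ):ℝ) = (m:ℝ) - k := by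
            push_cast [Nat.cast_sub hk']; ring
          rw [h1, h2]; ring
      _ = 2 * m * ∑ k ∈ range (m+1), cb k * cb (m-k) := by
          rw [← Finset.mul_sum]
  linarith

lemma cb_conv : ∀ n : ℕ, ∑ k ∈ range (n+1), cb k * cb (n-k) = 1 := by
  intro n
  induction n with
  | zero => simp [cb_zero]
  | succ n ih =>
    have hT1 := cb_T (n+1)
    have hshift : ∑ k ∈ range (n+1+1), (2*(k:ℝ)) * (cb k * cb (n+1-k))
        = ∑ i ∈ range (n+1), (2*((i:ℝ)+1)) * (cb (i+1) * cb (n-i)) := by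
      have hs := Finset.sum_range_succ' (fun k : ℕ => (2*(k:ℝ)) * (cb k * cb (n+1-k))) (n+1)
      simp only [Nat.cast_zero, mul_zero, zero_mul, add_zero] at hs
      rw [hs]
      refine Finset.sum_congr rfl fun i hi => ?_
      rw [show n + 1 - (i+1) = n - i from by omega]
      push_cast
      ring
    have hrec : ∀ i : ℕ, (2*((i:ℝ)+1)) * (cb (i+1) * cb (n-i)) = ((2*(i:ℝ)+1)) * (cb i * cb (n-i)) := by
      intro i
      have h := cb_rec i
      linear_combination cb (n-i) * h
    have hT2 : ∑ k ∈ range (n+1+1), (2*(k:ℝ)) * (cb k * cb (n+1-k))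
        = ∑ i ∈ range (n+1), ((2*(i:ℝ)+1)) * (cb i * cb (n-i)) := by
      rw [hshift]; exact Finset.sum_congr rfl fun i _ => hrec i
    have hT3 : ∑ i ∈ range (n+1), ((2*(i:ℝ)+1)) * (cb i * cb (n-i))
        = (n:ℝ) * (∑ k ∈ range (n+1), cb k * cb (n-k)) + ∑ k ∈ range (n+1), cb k * cb (n-k) := by
      have := cb_T n
      calc ∑ i ∈ range (n+1), ((2*(i:ℝ)+1)) * (cb i * cb (n-i))
          = (∑ i ∈ range (n+1), (2*(i:ℝ)) * (cb i * cb (n-i))) + ∑ i ∈ range (n+1), cb i * cb (n-i) := by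
            rw [← Finset.sum_add_distrib]; refine Finset.sum_congr rfl fun i _ => ?_; ring
        _ = _ := by rw [this]
    rw [ih] at hT3
    -- hT1 : ∑ 2k (cb k cb(n+1-k)) over range (n+2) = (n+1) * S(n+1)
    have : ((n:ℝ)+1) * (∑ k ∈ range (n+2), cb k * cb (n+1-k)) = (n:ℝ) + 1 := by
      push_cast at hT1
      rw [hT2, hT3] at hT1
      linarith
    have hne : ((n:ℝ)+1) ≠ 0 := by positivity
    field_simp at this
    linarith

section SA
variable {Ω : Type*} [MeasureSpace Ω] [IsProbabilityMeasure (ℙ : Measure Ω)]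
variable (η : ℕ → Ω → ℝ)

/-- The "negative staying" set in the product space. -/
def NSset (n : ℕ) : Set (Fin n → ℝ) :=
  {x | ∀ m : ℕ, 1 ≤ m → m ≤ n → (∑ j : Fin n, if (j:ℕ) < m then x j else 0) < 0}

lemma NSset_meas (n : ℕ) : MeasurableSet (NSset n) := by
  have h : NSset n = ⋂ (m : ℕ), ⋂ (_ : 1 ≤ m), ⋂ (_ : m ≤ n),
      {x : Fin n → ℝ | (∑ j : Fin n, if (j:ℕ) < m then x j else 0) < 0} := by
    ext x; simp [NSset, Set.mem_iInter]
  rw [h]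
  refine MeasurableSet.iInter fun m => MeasurableSet.iInter fun _ =>
    MeasurableSet.iInter fun _ => ?_
  refine measurableSet_lt (Finset.measurable_sum _ fun j _ => ?_) measurable_const
  split
  · exact measurable_pi_apply j
  · exact measurable_const

lemma sum_if_lt {n i : ℕ} (h : i ≤ n) (f : ℕ → ℝ) :
    (∑ j : Fin n, if (j:ℕ) < i then f (j:ℕ) else 0) = ∑ j ∈ range i, f j := by
  rw [Fin.sum_univ_eq_sum_range (fun j => if j < i then f j else 0) n, ← Finset.sum_filter]
  congr 1
  ext a
  simp only [Finset.mem_filter, Finset.mem_range]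
  omega

variable (hmeas : ∀ i, Measurable (η i))
  (hindep : iIndepFun η ℙ)
  (hident : ∀ i, IdentDistrib (η i) (η 0) ℙ ℙ)
  (hsymm : Measure.map (fun ω => -(η 0 ω)) ℙ = Measure.map (η 0) ℙ)

include hmeas hindep hident hsymm in
lemma law_tuple (n : ℕ) (ι : Fin n → ℕ) (hι : Function.Injective ι) (ε : Fin n → ℝ)
    (hε : ∀ j, ε j = 1 ∨ ε j = -1) :
    Measure.map (fun ω (j : Fin n) => ε j * η (ι j) ω) ℙ
      = Measure.pi (fun _ => Measure.map (η 0) ℙ) := by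
  classical
  refine (Measure.pi_eq fun s hs => ?_).symm
  have hT : Measurable (fun ω (j : Fin n) => ε j * η (ι j) ω) :=
    measurable_pi_lambda _ fun j => (hmeas (ι j)).const_mul (ε j)
  rw [Measure.map_apply hT (MeasurableSet.univ_pi hs)]
  set e : ℕ → Set ℝ := fun i =>
    if h : ∃ j, ι j = i then (fun y => ε h.choose * y) ⁻¹' s h.choose else Set.univ with he
  have heι : ∀ j, e (ι j) = (fun y => ε j * y) ⁻¹' s j := by
    intro j
    have hex : ∃ j', ι j' = ι j := ⟨j, rfl⟩
    rw [he]
    simp only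
    rw [dif_pos hex]
    have hch : hex.choose = j := hι hex.choose_spec
    rw [hch]
  have hemeas : ∀ i, MeasurableSet (e i) := by
    intro i
    rw [he]
    simp only
    split
    · exact (measurable_const_mul _) (hs _)
    · exact MeasurableSet.univ
  have hpre : (fun ω (j : Fin n) => ε j * η (ι j) ω) ⁻¹' Set.univ.pi s
      = ⋂ i ∈ Finset.image ι Finset.univ, η i ⁻¹' e i := by
    ext ω
    simp only [Set.mem_preimage, Set.mem_pi, Set.mem_univ, forall_true_left, Set.mem_iInter,
      Finset.mem_image, Finset.mem_univ, true_and]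
    constructor
    · rintro h i ⟨j, rfl⟩
      rw [heι j]
      exact h j
    · intro h j
      have := h (ι j) ⟨j, rfl⟩
      rwa [heι j] at this
  rw [hpre, hindep.measure_inter_preimage_eq_mul _ (fun i _ => hemeas i),
    Finset.prod_image (fun a _ b _ hab => hι hab)]
  refine Finset.prod_congr rfl fun j _ => ?_
  rw [heι j]
  have hms : MeasurableSet ((fun y => ε j * y) ⁻¹' s j) := (measurable_const_mul (ε j)) (hs j)
  rw [← Measure.map_apply (hmeas (ι j)) hms, (hident (ι j)).map_eq]
  rcases hε j with h1 | h1
  · simp [h1]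
  · have h2 : (fun y => ε j * y) ⁻¹' s j = Neg.neg ⁻¹' (s j) := by
      ext y; simp [h1]
    have hnegmap : Measure.map Neg.neg (Measure.map (η 0) ℙ) = Measure.map (η 0) ℙ := by
      rw [Measure.map_map measurable_neg (hmeas 0)]
      simpa [Function.comp_def] using hsymm
    rw [h2, ← Measure.map_apply measurable_neg (hs j), hnegmap]

/-- the probability of staying negative for `n` steps. -/
noncomputable def qq (n : ℕ) : ℝ≥0∞ :=
  Measure.pi (fun _ : Fin n => Measure.map (η 0) ℙ) (NSset n)

include hmeas hindep hident hsymm in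
lemma prob_tuple_NS (n : ℕ) (ι : Fin n → ℕ) (hι : Function.Injective ι) (ε : Fin n → ℝ)
    (hε : ∀ j, ε j = 1 ∨ ε j = -1) :
    ℙ ((fun ω (j : Fin n) => ε j * η (ι j) ω) ⁻¹' NSset n) = qq η n := by
  have hT : Measurable (fun ω (j : Fin n) => ε j * η (ι j) ω) :=
    measurable_pi_lambda _ fun j => (hmeas (ι j)).const_mul (ε j)
  rw [← Measure.map_apply hT (NSset_meas n),
    law_tuple η hmeas hindep hident hsymm n ι hι ε hε]
  rfl


lemma sum_reflect_Ico (f : ℕ → ℝ) {i m : ℕ} (h : i ≤ m) :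
    ∑ j ∈ range i, f (m - 1 - j) = ∑ l ∈ Finset.Ico (m - i) m, f l := by
  refine Finset.sum_nbij' (fun j => m - 1 - j) (fun l => m - 1 - l) ?_ ?_ ?_ ?_ ?_ <;>
    intros a ha <;> simp only [Finset.mem_range, Finset.mem_Ico] at * <;> omega

include hmeas hindep hident hsymm in
lemma probA (m : ℕ) :
    ℙ {ω | ∀ i, i < m → 0 < ∑ l ∈ Finset.Ico i m, η l ω} = qq η m := by
  have hev : {ω | ∀ i, i < m → 0 < ∑ l ∈ Finset.Ico i m, η l ω}
      = (fun ω (j : Fin m) => (-1 : ℝ) * η (m - 1 - (j:ℕ)) ω) ⁻¹' NSset m := by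
    ext ω
    simp only [Set.mem_setOf_eq, Set.mem_preimage, NSset]
    constructor
    · intro h i h1 h2
      rw [sum_if_lt h2 (fun l => (-1 : ℝ) * η (m - 1 - l) ω)]
      have : ∑ j ∈ range i, (-1 : ℝ) * η (m - 1 - j) ω
          = -(∑ j ∈ range i, η (m - 1 - j) ω) := by
        rw [← Finset.sum_neg_distrib]; exact Finset.sum_congr rfl fun _ _ => by ring
      rw [this, sum_reflect_Ico (fun l => η l ω) h2, neg_lt, neg_zero]
      exact h (m - i) (by omega)
    · intro h i hi
      have h2 : m - i ≤ m := by omega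
      have := h (m - i) (by omega) h2
      rw [sum_if_lt h2 (fun l => (-1 : ℝ) * η (m - 1 - l) ω)] at this
      have heq : ∑ j ∈ range (m - i), (-1 : ℝ) * η (m - 1 - j) ω
          = -(∑ j ∈ range (m - i), η (m - 1 - j) ω) := by
        rw [← Finset.sum_neg_distrib]; exact Finset.sum_congr rfl fun _ _ => by ring
      rw [heq, sum_reflect_Ico (fun l => η l ω) h2, show m - (m - i) = i from by omega] at this
      linarith
  rw [hev]
  exact prob_tuple_NS η hmeas hindep hident hsymm m (fun j => m - 1 - (j:ℕ))
    (fun a b hab => by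
      have ha := a.isLt; have hb := b.isLt
      have hab' : m - 1 - (a:ℕ) = m - 1 - (b:ℕ) := hab
      exact Fin.ext (by omega))
    (fun _ => (-1 : ℝ)) (fun _ => Or.inr rfl)

include hmeas hindep hident hsymm in
lemma probB (m n : ℕ) (h : m ≤ n) :
    ℙ {ω | ∀ j, m < j → j ≤ n → ∑ l ∈ Finset.Ico m j, η l ω < 0} = qq η (n - m) := by
  have hev : {ω | ∀ j, m < j → j ≤ n → ∑ l ∈ Finset.Ico m j, η l ω < 0}
      = (fun ω (j : Fin (n - m)) => (1 : ℝ) * η (m + (j:ℕ)) ω) ⁻¹' NSset (n - m) := by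
    ext ω
    simp only [Set.mem_setOf_eq, Set.mem_preimage, NSset]
    constructor
    · intro hω i h1 h2
      rw [sum_if_lt h2 (fun l => (1 : ℝ) * η (m + l) ω)]
      have heq : ∑ j ∈ range i, (1:ℝ) * η (m + j) ω = ∑ l ∈ Finset.Ico m (m + i), η l ω := by
        rw [Finset.sum_Ico_eq_sum_range (fun l => η l ω) m (m + i),
          show m + i - m = i from by omega]
        exact Finset.sum_congr rfl fun _ _ => by ring
      rw [heq]
      exact hω (m + i) (by omega) (by omega)
    · intro hω j h1 h2
      have h3 : j - m ≤ n - m := by omega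
      have := hω (j - m) (by omega) h3
      rw [sum_if_lt h3 (fun l => (1 : ℝ) * η (m + l) ω)] at this
      have heq : ∑ l ∈ range (j - m), (1:ℝ) * η (m + l) ω = ∑ l ∈ Finset.Ico m j, η l ω := by
        rw [Finset.sum_Ico_eq_sum_range (fun l => η l ω) m j]
        exact Finset.sum_congr rfl fun _ _ => by ring
      rwa [heq] at this
  rw [hev]
  exact prob_tuple_NS η hmeas hindep hident hsymm (n - m) (fun j => m + (j:ℕ))
    (fun a b hab => by
      have hab' : m + (a:ℕ) = m + (b:ℕ) := hab
      exact Fin.ext (by omega))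
    (fun _ => (1 : ℝ)) (fun _ => Or.inl rfl)

include hmeas hindep hident hsymm in
lemma probF1 (n : ℕ) :
    ℙ {ω | ∀ i, 1 ≤ i → i ≤ n → ∑ j ∈ range i, η j ω < 0} = qq η n := by
  have hev : {ω | ∀ i, 1 ≤ i → i ≤ n → ∑ j ∈ range i, η j ω < 0}
      = (fun ω (j : Fin n) => (1 : ℝ) * η (j:ℕ) ω) ⁻¹' NSset n := by
    ext ω
    simp only [Set.mem_setOf_eq, Set.mem_preimage, NSset]
    constructor
    · intro hω i h1 h2
      rw [sum_if_lt h2 (fun l => (1 : ℝ) * η l ω)]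
      have heq : ∑ j ∈ range i, (1:ℝ) * η j ω = ∑ j ∈ range i, η j ω :=
        Finset.sum_congr rfl fun _ _ => by ring
      rw [heq]; exact hω i h1 h2
    · intro hω i h1 h2
      have := hω i h1 h2
      rw [sum_if_lt h2 (fun l => (1 : ℝ) * η l ω)] at this
      have heq : ∑ j ∈ range i, (1:ℝ) * η j ω = ∑ j ∈ range i, η j ω :=
        Finset.sum_congr rfl fun _ _ => by ring
      rwa [heq] at this
  rw [hev]
  exact prob_tuple_NS η hmeas hindep hident hsymm n (fun j => (j:ℕ))
    (fun a b hab => Fin.ext hab) (fun _ => (1 : ℝ)) (fun _ => Or.inl rfl)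


lemma isProb_pi (hmeas : ∀ i, Measurable (η i)) (n : ℕ) :
    IsProbabilityMeasure (Measure.pi (fun _ : Fin n => Measure.map (η 0) ℙ)) := by
  haveI : IsProbabilityMeasure (Measure.map (η 0) ℙ) :=
    Measure.isProbabilityMeasure_map (hmeas 0).aemeasurable
  infer_instance

include hmeas in
lemma qq_zero : qq η 0 = 1 := by
  haveI := isProb_pi η hmeas 0
  have h : NSset 0 = Set.univ := by
    ext x
    constructor
    · intro _; trivial
    · intro _ m h1 h2; omega
  unfold qq
  rw [h]
  exact measure_univ

include hmeas in
lemma qq_ne_top (n : ℕ) : qq η n ≠ ⊤ := by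
  haveI := isProb_pi η hmeas n
  exact measure_ne_top _ _

lemma sum_sub_if_ge {m i : ℕ} (g : ℕ → ℝ) :
    (∑ l : ↥(range m), if i ≤ (l:ℕ) then g (l:ℕ) else 0) = ∑ l ∈ Finset.Ico i m, g l := by
  rw [Finset.sum_coe_sort (range m) (fun l => if i ≤ l then g l else 0), ← Finset.sum_filter]
  congr 1
  ext a
  simp only [Finset.mem_filter, Finset.mem_range, Finset.mem_Ico]
  omega

lemma sum_sub_if_lt {m n j : ℕ} (hj : j ≤ n) (g : ℕ → ℝ) :
    (∑ l : ↥(Finset.Ico m n), if (l:ℕ) < j then g (l:ℕ) else 0) = ∑ l ∈ Finset.Ico m j, g l := by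
  rw [Finset.sum_coe_sort (Finset.Ico m n) (fun l => if l < j then g l else 0),
    ← Finset.sum_filter]
  congr 1
  ext a
  simp only [Finset.mem_filter, Finset.mem_Ico]
  omega

include hmeas hindep hident hsymm in
lemma probE (m n : ℕ) (h : m ≤ n) :
    ℙ ({ω | ∀ i, i < m → 0 < ∑ l ∈ Finset.Ico i m, η l ω}
        ∩ {ω | ∀ j, m < j → j ≤ n → ∑ l ∈ Finset.Ico m j, η l ω < 0})
      = qq η m * qq η (n - m) := by
  classical
  set SA : Set (↥(range m) → ℝ) :=
    {y | ∀ i, i < m → 0 < ∑ l : ↥(range m), if i ≤ (l:ℕ) then y l else 0} with hSAdef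
  set SB : Set (↥(Finset.Ico m n) → ℝ) :=
    {y | ∀ j, m < j → j ≤ n → (∑ l : ↥(Finset.Ico m n), if (l:ℕ) < j then y l else 0) < 0}
    with hSBdef
  have hSA : MeasurableSet SA := by
    have : SA = ⋂ i, ⋂ (_ : i < m),
        {y : ↥(range m) → ℝ | 0 < ∑ l : ↥(range m), if i ≤ (l:ℕ) then y l else 0} := by
      ext y; simp [hSAdef, Set.mem_iInter]
    rw [this]
    refine MeasurableSet.iInter fun i => MeasurableSet.iInter fun _ => ?_
    refine measurableSet_lt measurable_const (Finset.measurable_sum _ fun l _ => ?_)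
    split
    · exact measurable_pi_apply l
    · exact measurable_const
  have hSB : MeasurableSet SB := by
    have : SB = ⋂ j, ⋂ (_ : m < j), ⋂ (_ : j ≤ n),
        {y : ↥(Finset.Ico m n) → ℝ |
          (∑ l : ↥(Finset.Ico m n), if (l:ℕ) < j then y l else 0) < 0} := by
      ext y; simp [hSBdef, Set.mem_iInter]
    rw [this]
    refine MeasurableSet.iInter fun j => MeasurableSet.iInter fun _ =>
      MeasurableSet.iInter fun _ => ?_
    refine measurableSet_lt (Finset.measurable_sum _ fun l _ => ?_) measurable_const
    split
    · exact measurable_pi_apply l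
    · exact measurable_const
  have hU : {ω | ∀ i, i < m → 0 < ∑ l ∈ Finset.Ico i m, η l ω}
      = (fun ω (i : ↥(range m)) => η (i:ℕ) ω) ⁻¹' SA := by
    ext ω
    simp only [Set.mem_setOf_eq, Set.mem_preimage, hSAdef]
    refine forall_congr' fun i => imp_congr_right fun _ => ?_
    rw [sum_sub_if_ge (fun l => η l ω)]
  have hV : {ω | ∀ j, m < j → j ≤ n → ∑ l ∈ Finset.Ico m j, η l ω < 0}
      = (fun ω (i : ↥(Finset.Ico m n)) => η (i:ℕ) ω) ⁻¹' SB := by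
    ext ω
    simp only [Set.mem_setOf_eq, Set.mem_preimage, hSBdef]
    refine forall_congr' fun j => imp_congr_right fun _ => imp_congr_right fun hj => ?_
    rw [sum_sub_if_lt hj (fun l => η l ω)]
  have hdisjST : Disjoint (range m) (Finset.Ico m n) := by
    rw [Finset.disjoint_left]
    intro a ha hb
    simp only [Finset.mem_range, Finset.mem_Ico] at ha hb
    omega
  have hind := hindep.indepFun_finset (range m) (Finset.Ico m n) hdisjST hmeas
  rw [hU, hV, hind.measure_inter_preimage_eq_mul SA SB hSA hSB, ← hU, ← hV,
    probA η hmeas hindep hident hsymm m, probB η hmeas hindep hident hsymm m n h]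

variable (hcont : Measure.map (η 0) ℙ ≪ (volume : Measure ℝ))

include hmeas hindep hident hcont in
lemma null_block (i j : ℕ) (hij : i < j) :
    ℙ {ω | ∑ l ∈ Finset.Ico i j, η l ω = 0} = 0 := by
  set T : Ω → ℝ := fun ω => ∑ l ∈ Finset.Ico (i+1) j, η l ω with hT
  have hTmeas : Measurable T := Finset.measurable_sum _ fun l _ => hmeas l
  have hInd : IndepFun T (η i) ℙ := by
    have h0 := hindep.indepFun_finsetSum_of_notMem hmeas
      (s := Finset.Ico (i+1) j) (i := i) (by simp)
    have heq : (∑ l ∈ Finset.Ico (i+1) j, η l) = T := by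
      funext ω; rw [hT]; simp [Finset.sum_apply]
    rwa [heq] at h0
  have hpair : Measurable fun ω => (T ω, η i ω) := hTmeas.prodMk (hmeas i)
  have hD : MeasurableSet {p : ℝ × ℝ | p.1 + p.2 = 0} :=
    measurableSet_eq_fun (measurable_fst.add measurable_snd) measurable_const
  have hev : {ω | ∑ l ∈ Finset.Ico i j, η l ω = 0}
      = (fun ω => (T ω, η i ω)) ⁻¹' {p : ℝ × ℝ | p.1 + p.2 = 0} := by
    ext ω
    simp only [Set.mem_setOf_eq, Set.mem_preimage]
    rw [Finset.sum_eq_sum_Ico_succ_bot hij (fun l => η l ω), hT]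
    constructor <;> intro hh <;> linarith
  rw [hev, ← Measure.map_apply hpair hD,
    (indepFun_iff_map_prod_eq_prod_map_map hTmeas.aemeasurable (hmeas i).aemeasurable).mp hInd,
    (hident i).map_eq, Measure.prod_apply hD]
  have hslice : ∀ t : ℝ,
      (Measure.map (η 0) ℙ) (Prod.mk t ⁻¹' {p : ℝ × ℝ | p.1 + p.2 = 0}) = 0 := by
    intro t
    have hset : Prod.mk t ⁻¹' {p : ℝ × ℝ | p.1 + p.2 = 0} = {-t} := by
      ext y
      simp only [Set.mem_preimage, Set.mem_setOf_eq, Set.mem_singleton_iff]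
      constructor <;> intro hh <;> linarith
    rw [hset]
    exact hcont Real.volume_singleton
  simp only [hslice]
  simp

include hmeas hindep hident hsymm hcont in
lemma conv_one (n : ℕ) :
    ∑ m ∈ range (n+1), qq η m * qq η (n - m) = 1 := by
  classical
  set A : ℕ → Set Ω := fun m => {ω | ∀ i, i < m → 0 < ∑ l ∈ Finset.Ico i m, η l ω} with hA
  set B : ℕ → Set Ω := fun m =>
    {ω | ∀ j, m < j → j ≤ n → ∑ l ∈ Finset.Ico m j, η l ω < 0} with hB
  set E : ℕ → Set Ω := fun m => A m ∩ B m with hE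
  have hmeasSum : ∀ a b : ℕ, Measurable fun ω => ∑ l ∈ Finset.Ico a b, η l ω :=
    fun a b => Finset.measurable_sum _ fun l _ => hmeas l
  have hmeasA : ∀ m, MeasurableSet (A m) := by
    intro m
    have h : A m = ⋂ i, ⋂ (_ : i < m), {ω | 0 < ∑ l ∈ Finset.Ico i m, η l ω} := by
      ext ω; simp [hA, Set.mem_iInter]
    rw [h]
    exact MeasurableSet.iInter fun i => MeasurableSet.iInter fun _ =>
      measurableSet_lt measurable_const (hmeasSum i m)
  have hmeasB : ∀ m, MeasurableSet (B m) := by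
    intro m
    have h : B m = ⋂ j, ⋂ (_ : m < j), ⋂ (_ : j ≤ n),
        {ω | ∑ l ∈ Finset.Ico m j, η l ω < 0} := by
      ext ω; simp [hB, Set.mem_iInter]
    rw [h]
    exact MeasurableSet.iInter fun j => MeasurableSet.iInter fun _ =>
      MeasurableSet.iInter fun _ =>
        measurableSet_lt (hmeasSum m j) measurable_const
  have hmeasE : ∀ m, MeasurableSet (E m) := fun m => (hmeasA m).inter (hmeasB m)
  have hdisj : (↑(range (n+1)) : Set ℕ).PairwiseDisjoint E := by
    have key : ∀ a b : ℕ, a < b → b ≤ n → Disjoint (E a) (E b) := by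
      intro a b hlt hbn
      refine Set.disjoint_left.mpr fun ω hωa hωb => ?_
      have h1 : ∑ l ∈ Finset.Ico a b, η l ω < 0 := hωa.2 b hlt hbn
      have h2 : 0 < ∑ l ∈ Finset.Ico a b, η l ω := hωb.1 a hlt
      linarith
    intro a ha b hb hab
    simp only [Finset.coe_range, Set.mem_Iio] at ha hb
    rcases lt_or_gt_of_ne hab with h | h
    · exact key a b h (by omega)
    · exact (key b a h (by omega)).symm
  set N : Set Ω := ⋃ i ∈ range (n+1), ⋃ j ∈ range (n+1),
      (if i < j then {ω | ∑ l ∈ Finset.Ico i j, η l ω = 0} else (∅ : Set Ω)) with hN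
  have hmeasN : MeasurableSet N := by
    refine MeasurableSet.biUnion (Finset.countable_toSet _) fun i _ =>
      MeasurableSet.biUnion (Finset.countable_toSet _) fun j _ => ?_
    split
    · exact measurableSet_eq_fun (hmeasSum i j) measurable_const
    · exact MeasurableSet.empty
  have hNnull : ℙ N = 0 := by
    refine le_antisymm ?_ zero_le
    refine le_trans (measure_biUnion_finset_le _ _) ?_
    refine le_trans (Finset.sum_le_sum fun i _ => measure_biUnion_finset_le _ _) ?_
    have hz : ∀ i ∈ range (n+1), ∀ j ∈ range (n+1),
        ℙ (if i < j then {ω | ∑ l ∈ Finset.Ico i j, η l ω = 0} else (∅ : Set Ω)) = 0 := by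
      intro i _ j _
      split
      · exact null_block η hmeas hindep hident hcont i j ‹i < j›
      · simp
    refine le_of_eq (Eq.trans (Finset.sum_congr rfl fun i hi =>
      Finset.sum_congr rfl fun j hj => hz i hi j hj) (by simp))
  have hcover : Nᶜ ⊆ ⋃ m ∈ range (n+1), E m := by
    intro ω hω
    have hω' : ∀ i j : ℕ, i < j → j ≤ n → ∑ l ∈ Finset.Ico i j, η l ω ≠ 0 := by
      intro i j h1 h2 h0
      refine hω ?_
      rw [hN]
      refine Set.mem_biUnion (show i ∈ range (n+1) from by
        simp only [Finset.mem_range]; omega) ?_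
      refine Set.mem_biUnion (show j ∈ range (n+1) from by
        simp only [Finset.mem_range]; omega) ?_
      rw [if_pos h1]
      exact h0
    obtain ⟨m, hm, hmax⟩ := Finset.exists_max_image (range (n+1))
      (fun i => ∑ l ∈ range i, η l ω) ⟨0, by simp⟩
    have hmn : m ≤ n := by simpa [Nat.lt_succ_iff] using hm
    refine Set.mem_biUnion hm ⟨?_, ?_⟩
    · intro i hi
      have hle := hmax i (by simp only [Finset.mem_range]; omega)
      have hne := hω' i m hi hmn
      rw [Finset.sum_Ico_eq_sub (fun l => η l ω) (le_of_lt hi)] at hne ⊢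
      have hlt : (∑ l ∈ range i, η l ω) < ∑ l ∈ range m, η l ω := by
        rcases lt_or_eq_of_le hle with hlt | heq
        · exact hlt
        · exact absurd (by rw [heq]; ring) hne
      linarith
    · intro j h1 h2
      have hle := hmax j (by simp only [Finset.mem_range]; omega)
      have hne := hω' m j h1 h2
      rw [Finset.sum_Ico_eq_sub (fun l => η l ω) (le_of_lt h1)] at hne ⊢
      have hlt : (∑ l ∈ range j, η l ω) < ∑ l ∈ range m, η l ω := by
        rcases lt_or_eq_of_le hle with hlt | heq
        · exact hlt
        · exact absurd (by rw [heq]; ring) hne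
      linarith
  have h1 : ℙ (⋃ m ∈ range (n+1), E m) = 1 := by
    refine le_antisymm prob_le_one ?_
    calc (1:ℝ≥0∞) = ℙ Nᶜ := by
          rw [measure_compl hmeasN (measure_ne_top _ _), hNnull, measure_univ]
          simp
      _ ≤ ℙ (⋃ m ∈ range (n+1), E m) := measure_mono hcover
  rw [measure_biUnion_finset hdisj (fun m _ => hmeasE m)] at h1
  rw [← h1]
  refine Finset.sum_congr rfl fun m hm => ?_
  have hmn : m ≤ n := by simpa [Nat.lt_succ_iff] using hm
  have := probE η hmeas hindep hident hsymm m n hmn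
  simp only [hE, hA, hB]
  exact this.symm


include hmeas hindep hident hsymm hcont in
lemma qq_toReal_eq_cb : ∀ n : ℕ, (qq η n).toReal = cb n := by
  have hreal : ∀ N : ℕ, ∑ m ∈ range (N+1), (qq η m).toReal * (qq η (N-m)).toReal = 1 := by
    intro N
    have h := conv_one η hmeas hindep hident hsymm hcont N
    have h2 := congrArg ENNReal.toReal h
    rw [ENNReal.toReal_sum (fun m _ =>
      ENNReal.mul_ne_top (qq_ne_top η hmeas m) (qq_ne_top η hmeas (N-m)))] at h2
    simpa [ENNReal.toReal_mul] using h2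
  have hr0 : (qq η 0).toReal = 1 := by rw [qq_zero η hmeas]; simp
  intro n
  induction n using Nat.strong_induction_on with
  | _ n ih =>
    match n with
    | 0 => rw [hr0, cb_zero]
    | Nat.succ n =>
      have hR := hreal (n+1)
      have hC := cb_conv (n+1)
      rw [Finset.sum_range_succ] at hR hC
      rw [Finset.sum_range_succ'] at hR hC
      have hmid : ∑ i ∈ range n, (qq η (i+1)).toReal * (qq η (n+1-(i+1))).toReal
          = ∑ i ∈ range n, cb (i+1) * cb (n+1-(i+1)) := by
        refine Finset.sum_congr rfl fun i hi => ?_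
        have hi' : i < n := by simpa using hi
        rw [ih (i+1) (by omega), ih (n+1-(i+1)) (by omega)]
      rw [hmid, hr0] at hR
      rw [cb_zero] at hC
      simp only [Nat.sub_zero, Nat.sub_self] at hR hC
      rw [hr0] at hR
      rw [cb_zero] at hC
      linarith

include hmeas hindep hident hsymm hcont in
lemma qq_eq_ofReal_cb (n : ℕ) : qq η n = ENNReal.ofReal (cb n) := by
  rw [← qq_toReal_eq_cb η hmeas hindep hident hsymm hcont n,
    ENNReal.ofReal_toReal (qq_ne_top η hmeas n)]

end SA

theorem sparre_andersen
    {Ω : Type*} [MeasureSpace Ω] [IsProbabilityMeasure (ℙ : Measure Ω)]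
    (η : ℕ → Ω → ℝ)
    (hmeas : ∀ i, Measurable (η i))
    (hindep : iIndepFun η ℙ)
    (hident : ∀ i, IdentDistrib (η i) (η 0) ℙ ℙ)
    (hsymm : Measure.map (fun ω => -(η 0 ω)) ℙ = Measure.map (η 0) ℙ)
    (hcont : Measure.map (η 0) ℙ ≪ (volume : Measure ℝ))
    (X : ℕ → Ω → ℝ) (hX : ∀ n ω, X n ω = ∑ i ∈ Finset.range n, η i ω)
    (k : ℕ) (hk : 1 ≤ k) :
    ℙ {ω | ∀ i, 1 ≤ i → i ≤ k → X i ω < X 0 ω}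
      = ENNReal.ofReal ((Nat.choose (2 * k) k : ℝ) / 4 ^ k) := by
  have hev : {ω | ∀ i, 1 ≤ i → i ≤ k → X i ω < X 0 ω}
      = {ω | ∀ i, 1 ≤ i → i ≤ k → ∑ j ∈ Finset.range i, η j ω < 0} := by
    ext ω
    simp only [Set.mem_setOf_eq]
    refine forall_congr' fun i => imp_congr_right fun _ => imp_congr_right fun _ => ?_
    rw [hX i ω, hX 0 ω]
    simp
  rw [hev, probF1 η hmeas hindep hident hsymm k,
    qq_eq_ofReal_cb η hmeas hindep hident hsymm hcont k]
  congr 1
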